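/- For any p-strings x and y with fce(x) = fce(y), the lexicographic comparison ⟨x⟩ < ⟨y⟩ holds if and only if ⟨x[2..]⟩ < ⟨y[2..]⟩ (equivalently: removing the first characters preserves lexicographic order of p-encodings when the first-character encodings agree). -/

import Mathlib

/-- Symbols of a parameterized string: static symbols `s a` (from Σs) and
parameter symbols `p a` (from Σp). -/
inductive PSym where
  | s : ℕ → PSym
  | p : ℕ → PSym
deriving DecidableEq

/-- Symbols of a p-encoded string: static symbols, finite distances, and ∞. -/
inductive Enc where
  | s : ℕ → Enc
  | fin : ℕ → Enc
  | inf : Enc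
deriving DecidableEq

/-- Order embedding: static symbols < natural numbers < ∞. -/
def Enc.toPair : Enc → ℕ ×ₗ ℕ
  | .s a => toLex (0, a)
  | .fin d => toLex (1, d)
  | .inf => toLex (2, 0)

instance : LinearOrder Enc :=
  LinearOrder.lift' Enc.toPair (by
    rintro (a | a | _) (b | b | _) h <;>
      simp_all [Enc.toPair, toLex_inj, Prod.ext_iff])

/-- Largest position `j < i` (0-based) carrying the same symbol as position `i`. -/
def prevOcc (w : List PSym) (i : ℕ) : Option ℕ :=
  ((List.range i).filter (fun j => w[j]? = w[i]?)).max?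

/-- The p-encoding of position `i` (0-based) of `w`. -/
def pencSym (w : List PSym) (i : ℕ) : Enc :=
  match w[i]? with
  | some (PSym.s a) => Enc.s a
  | some (PSym.p _) =>
    match prevOcc w i with
    | some j => Enc.fin (i - j)
    | none => Enc.inf
  | none => Enc.inf

/-- The p-encoding ⟨w⟩ of a p-string `w`. -/
def penc (w : List PSym) : List Enc :=
  (List.range w.length).map (pencSym w)

/-- Lexicographic (strict) order on p-encoded strings. -/
def lexLt (x y : List Enc) : Prop := List.Lex (· < ·) x y

def lexLe (x y : List Enc) : Prop := lexLt x y ∨ x = y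

/-- Length of the longest common prefix. -/
def lcp {α : Type*} [DecidableEq α] : List α → List α → ℕ
  | a :: x, b :: y => if a = b then lcp x y + 1 else 0
  | _, _ => 0

/-- Number of ∞'s in the longest common prefix of two p-encoded strings. -/
def lcpInf (x y : List Enc) : ℕ := (x.take (lcp x y)).count Enc.inf

/-- Number of distinct p-symbols occurring in `w` (denoted |w|_p). -/
def distinctP (w : List PSym) : ℕ :=
  (w.filterMap (fun s => match s with | PSym.p a => some a | PSym.s _ => none)).dedup.length

/-- For `w` starting with a p-symbol: the rank of `w[1]` among the distinct
p-symbols of `w[1..h+1]`, where `h+1 = min{|w|, second occurrence of w[1] in w}`. -/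
def fceRank (w : List PSym) : ℕ :=
  match w with
  | [] => 0
  | c :: rest => distinctP ((c :: rest).take (min (c :: rest).length (2 + rest.idxOf c)))

/-- The function fce from the paper; `fce ε = $` is modelled as `Enc.s 0`. -/
def fce (w : List PSym) : Enc :=
  match w with
  | [] => Enc.s 0
  | PSym.s a :: _ => Enc.s a
  | w => Enc.fin (fceRank w)


namespace Stmt4

/-- Option-level strict order used to characterize List.Lex via positions. -/
def oLt : Option Enc → Option Enc → Prop
  | none, some _ => True
  | some a, some b => a < b
  | _, _ => False

@[simp] lemma oLt_none_some (a : Enc) : oLt none (some a) := trivial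
@[simp] lemma oLt_some_some (a b : Enc) : oLt (some a) (some b) ↔ a < b := Iff.rfl
@[simp] lemma oLt_none_none : ¬ oLt none none := fun h => h
@[simp] lemma oLt_some_none (a : Enc) : ¬ oLt (some a) none := fun h => h

lemma oLt_irrefl (a : Option Enc) : ¬ oLt a a := by
  cases a <;> simp

lemma lexLt_iff (x y : List Enc) :
    lexLt x y ↔ ∃ i : ℕ, (∀ j < i, x[j]? = y[j]?) ∧ oLt x[i]? y[i]? := by
  unfold lexLt
  induction x generalizing y with
  | nil =>
    cases y with
    | nil =>
      simp only [List.not_lex_nil, false_iff]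
      rintro ⟨i, _, h2⟩
      simp at h2
    | cons b t =>
      constructor
      · intro _; exact ⟨0, by simp, by simp⟩
      · intro _; exact List.Lex.nil
  | cons a s ih =>
    cases y with
    | nil =>
      simp only [List.not_lex_nil, false_iff]
      rintro ⟨i, h1, h2⟩
      cases i with
      | zero => simp at h2
      | succ i =>
        have := h1 0 (Nat.succ_pos _)
        simp at this
    | cons b t =>
      constructor
      · intro h
        cases h with
        | rel hab => exact ⟨0, by simp, by simpa using hab⟩
        | cons h' =>
          obtain ⟨i, h1, h2⟩ := (ih t).mp h'
          exact ⟨i + 1, by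
            intro j hj
            cases j with
            | zero => simp
            | succ j => simpa using h1 j (by omega), by simpa using h2⟩
      · rintro ⟨i, h1, h2⟩
        cases i with
        | zero =>
          simp only [List.getElem?_cons_zero, oLt_some_some] at h2
          exact List.Lex.rel h2
        | succ i =>
          have h0 := h1 0 (Nat.succ_pos _)
          simp only [List.getElem?_cons_zero, Option.some.injEq] at h0
          subst h0
          refine List.Lex.cons ((ih t).mpr ⟨i, ?_, by simpa using h2⟩)
          intro j hj
          simpa using h1 (j + 1) (by omega)

lemma lexLt_cons_iff (a : Enc) (x y : List Enc) :
    lexLt (a :: x) (a :: y) ↔ lexLt x y := by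
  constructor
  · intro h
    cases h with
    | rel hab => exact absurd hab (lt_irrefl a)
    | cons h' => exact h'
  · exact List.Lex.cons

end Stmt4
namespace Stmt4

lemma prevOcc_eq_some_iff {w : List PSym} {i j : ℕ} :
    prevOcc w i = some j ↔
      j < i ∧ w[j]? = w[i]? ∧ ∀ l, j < l → l < i → w[l]? ≠ w[i]? := by
  unfold prevOcc
  rw [List.max?_eq_some_iff_legacy (fun a => le_refl a) (fun a b => max_choice a b)
    (fun a b c => max_le_iff)]
  simp only [List.mem_filter, List.mem_range, decide_eq_true_eq]
  constructor
  · rintro ⟨⟨hj, he⟩, hmax⟩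
    refine ⟨hj, he, fun l hjl hli hle => ?_⟩
    exact absurd (hmax l ⟨hli, hle⟩) (by omega)
  · rintro ⟨hj, he, hmax⟩
    refine ⟨⟨hj, he⟩, fun b ⟨hb, hbe⟩ => ?_⟩
    by_contra hc
    exact hmax b (by omega) hb hbe

lemma prevOcc_eq_none_iff {w : List PSym} {i : ℕ} :
    prevOcc w i = none ↔ ∀ j < i, w[j]? ≠ w[i]? := by
  unfold prevOcc
  rw [List.max?_eq_none_iff, List.filter_eq_nil_iff]
  simp

@[simp] lemma prevOcc_zero (w : List PSym) : prevOcc w 0 = none := by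
  simp [prevOcc]

/-- Shifting: previous occurrence in the tail. -/
lemma prevOcc_cons_succ_of_some {c : PSym} {t : List PSym} {i j : ℕ}
    (h : prevOcc t i = some j) : prevOcc (c :: t) (i + 1) = some (j + 1) := by
  rw [prevOcc_eq_some_iff] at h ⊢
  obtain ⟨hj, he, hmax⟩ := h
  refine ⟨by omega, by simpa using he, fun l hl1 hl2 => ?_⟩
  obtain ⟨l', rfl⟩ : ∃ l', l = l' + 1 := ⟨l - 1, by omega⟩
  simpa using hmax l' (by omega) (by omega)

lemma prevOcc_cons_succ_of_none_eq {c : PSym} {t : List PSym} {i : ℕ}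
    (h : prevOcc t i = none) (he : t[i]? = some c) :
    prevOcc (c :: t) (i + 1) = some 0 := by
  rw [prevOcc_eq_none_iff] at h
  rw [prevOcc_eq_some_iff]
  refine ⟨by omega, by simpa using he.symm, fun l hl1 hl2 => ?_⟩
  obtain ⟨l', rfl⟩ : ∃ l', l = l' + 1 := ⟨l - 1, by omega⟩
  simpa using h l' (by omega)

lemma prevOcc_cons_succ_of_none_ne {c : PSym} {t : List PSym} {i : ℕ}
    (h : prevOcc t i = none) (he : t[i]? ≠ some c) :
    prevOcc (c :: t) (i + 1) = none := by
  rw [prevOcc_eq_none_iff] at h ⊢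
  intro j hj
  cases j with
  | zero =>
    simp only [List.getElem?_cons_zero, List.getElem?_cons_succ]
    exact fun hc => he hc.symm
  | succ j =>
    simpa using h j (by omega)

end Stmt4
namespace Stmt4

lemma pencSym_zero_s {a : ℕ} {t : List PSym} : pencSym (PSym.s a :: t) 0 = Enc.s a := by
  simp [pencSym]

lemma pencSym_zero_p {e : ℕ} {t : List PSym} : pencSym (PSym.p e :: t) 0 = Enc.inf := by
  simp [pencSym]

lemma pencSym_of_ge {w : List PSym} {i : ℕ} (h : w.length ≤ i) : pencSym w i = Enc.inf := by
  unfold pencSym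
  rw [List.getElem?_eq_none h]

/-- Generic shift: no interaction with the head. -/
lemma pencSym_cons_succ {c : PSym} {t : List PSym} {i : ℕ}
    (h : t[i]? ≠ some c ∨ prevOcc t i ≠ none) :
    pencSym (c :: t) (i + 1) = pencSym t i := by
  unfold pencSym
  rw [List.getElem?_cons_succ]
  rcases he : t[i]? with _ | (a | e)
  · rfl
  · rfl
  · rcases hp : prevOcc t i with _ | j
    · rcases h with h | h
      · rw [prevOcc_cons_succ_of_none_ne hp h]
      · exact absurd hp h
    · rw [prevOcc_cons_succ_of_some hp]
      have hji : j < i := (prevOcc_eq_some_iff.mp hp).1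
      show Enc.fin (i + 1 - (j + 1)) = Enc.fin (i - j)
      congr 1
      omega

/-- Static head: shifting always agrees. -/
lemma pencSym_cons_succ_s {a : ℕ} {t : List PSym} {i : ℕ} :
    pencSym (PSym.s a :: t) (i + 1) = pencSym t i := by
  by_cases h : t[i]? = some (PSym.s a) ∧ prevOcc t i = none
  · unfold pencSym
    rw [List.getElem?_cons_succ, h.1]
  · rw [pencSym_cons_succ]
    tauto

/-- Special position: first re-occurrence of the p-symbol head. -/
lemma pencSym_cons_succ_special {e : ℕ} {t : List PSym} {i : ℕ}
    (he : t[i]? = some (PSym.p e)) (hp : prevOcc t i = none) :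
    pencSym t i = Enc.inf ∧ pencSym (PSym.p e :: t) (i + 1) = Enc.fin (i + 1) := by
  constructor
  · unfold pencSym; rw [he, hp]
  · unfold pencSym
    rw [List.getElem?_cons_succ, he, prevOcc_cons_succ_of_none_eq hp he]
    simp

lemma penc_getElem? {w : List PSym} {i : ℕ} :
    (penc w)[i]? = if i < w.length then some (pencSym w i) else none := by
  unfold penc
  split
  · rw [List.getElem?_map, List.getElem?_range (by assumption)]
    rfl
  · rw [List.getElem?_eq_none]
    simpa using by omega

lemma penc_cons (c : PSym) (t : List PSym) :
    penc (c :: t) = pencSym (c :: t) 0 :: (List.range t.length).map (fun i => pencSym (c :: t) (i + 1)) := by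
  unfold penc
  rw [List.length_cons, List.range_succ_eq_map, List.map_cons, List.map_map]
  rfl

end Stmt4
namespace Stmt4

def pf : PSym → Option ℕ := fun s => match s with | PSym.p a => some a | PSym.s _ => none

@[simp] lemma pf_s (a : ℕ) : pf (PSym.s a) = none := rfl
@[simp] lemma pf_p (a : ℕ) : pf (PSym.p a) = some a := rfl

lemma distinctP_eq (l : List PSym) : distinctP l = (l.filterMap pf).toFinset.card := by
  rw [List.card_toFinset]; rfl

lemma mem_pf_iff {l : List PSym} {e : ℕ} :
    e ∈ (l.filterMap pf).toFinset ↔ PSym.p e ∈ l := by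
  simp only [List.mem_toFinset, List.mem_filterMap]
  constructor
  · rintro ⟨a, ha, hfa⟩
    cases a with
    | s a => simp at hfa
    | p a =>
      simp only [pf_p, Option.some.injEq] at hfa
      subst hfa; exact ha
  · intro h; exact ⟨PSym.p e, h, rfl⟩

def cnt (w : List PSym) (K : ℕ) : ℕ :=
  ((List.range K).filter (fun i => pencSym w i = Enc.inf)).length

lemma cnt_succ (w : List PSym) (K : ℕ) :
    cnt w (K + 1) = cnt w K + if pencSym w K = Enc.inf then 1 else 0 := by
  unfold cnt
  rw [List.range_succ, List.filter_append, List.length_append]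
  congr 1
  split <;> simp_all

lemma pencSym_eq_inf_iff {w : List PSym} {i : ℕ} (hi : i < w.length) :
    pencSym w i = Enc.inf ↔
      (∃ e, w[i]? = some (PSym.p e)) ∧ ∀ j < i, w[j]? ≠ w[i]? := by
  unfold pencSym
  have hw : w[i]? = some w[i] := List.getElem?_eq_getElem hi
  rcases hsym : w[i] with a | e
  · rw [hw, hsym]
    simp
  · rw [hw, hsym]
    rcases hp : prevOcc w i with _ | j
    · simp only [prevOcc_eq_none_iff, hw, hsym] at hp
      simpa using hp
    · obtain ⟨hj, he, _⟩ := prevOcc_eq_some_iff.mp hp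
      rw [hw, hsym] at he
      simp only [reduceCtorEq, false_iff, not_and, not_forall]
      intro _
      exact ⟨j, hj, by simp [he]⟩

lemma mem_take_iff {t : List PSym} {K : ℕ} {a : PSym} :
    a ∈ t.take K ↔ ∃ j < K, t[j]? = some a := by
  rw [List.mem_iff_getElem?]
  constructor
  · rintro ⟨n, hn⟩
    rw [List.getElem?_take] at hn
    split at hn
    · exact ⟨n, by assumption, hn⟩
    · simp at hn
  · rintro ⟨j, hj, hja⟩
    exact ⟨j, by rw [List.getElem?_take]; simp [hj, hja]⟩

/-- Key counting lemma: distinct p-symbols in a prefix = number of ∞'s. -/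
lemma distinctP_take (w : List PSym) (K : ℕ) :
    distinctP (w.take K) = cnt w (min K w.length) := by
  induction K with
  | zero => simp [distinctP, cnt]
  | succ K ih =>
    by_cases hK : K < w.length
    · have hmin : min K w.length = K := by omega
      have hmin' : min (K + 1) w.length = K + 1 := by omega
      rw [hmin'] ; rw [hmin] at ih
      rw [cnt_succ, List.take_succ, List.getElem?_eq_getElem hK]
      rcases hsym : w[K] with a | e
      · have hnotinf : pencSym w K ≠ Enc.inf := by
          intro hcon
          rw [pencSym_eq_inf_iff hK, List.getElem?_eq_getElem hK, hsym] at hcon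
          obtain ⟨⟨e, he⟩, -⟩ := hcon
          simp at he
        rw [if_neg hnotinf, distinctP_eq]
        have h2 : (List.take K w ++ (some (PSym.s a)).toList).filterMap pf
            = (w.take K).filterMap pf := by simp
        rw [h2, ← distinctP_eq, ih]
        omega
      · have hmem : e ∈ ((w.take K).filterMap pf).toFinset ↔ ∃ j < K, w[j]? = some (PSym.p e) := by
          rw [mem_pf_iff, mem_take_iff]
        have hinf : pencSym w K = Enc.inf ↔ ∀ j < K, w[j]? ≠ some (PSym.p e) := by
          rw [pencSym_eq_inf_iff hK, List.getElem?_eq_getElem hK, hsym]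
          simp
        rw [distinctP_eq]
        have h2 : (List.take K w ++ (some (PSym.p e)).toList).filterMap pf
            = (w.take K).filterMap pf ++ [e] := by simp
        rw [h2, List.toFinset_append]
        have h3 : ([e] : List ℕ).toFinset = {e} := by simp
        rw [h3, Finset.union_comm, ← Finset.insert_eq]
        by_cases hc : ∃ j < K, w[j]? = some (PSym.p e)
        · rw [Finset.insert_eq_self.mpr (hmem.mpr hc),
            if_neg (by rw [hinf]; push_neg; simpa using hc), ← distinctP_eq, ih]
          omega
        · rw [Finset.card_insert_of_notMem (fun hm => hc (hmem.mp hm)),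
            if_pos (by rw [hinf]; push_neg at hc; exact hc), ← distinctP_eq, ih]
    · have h1 : min (K + 1) w.length = w.length := by omega
      have h2 : min K w.length = w.length := by omega
      rw [h1]; rw [h2] at ih
      rw [List.take_of_length_le (by omega)]
      rw [List.take_of_length_le (by omega)] at ih
      exact ih

lemma indexOf_min {α : Type*} [DecidableEq α] {l : List α} {a : α} {j : ℕ}
    (h : j < l.idxOf a) : l[j]? ≠ some a := by
  induction l generalizing j with
  | nil => simp
  | cons b t ih =>
    rw [List.idxOf_cons] at h
    by_cases hba : b = a
    · simp [hba] at h
    · have hb : (b == a) = false := beq_eq_false_iff_ne.mpr hba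
      rw [hb, cond_false] at h
      cases j with
      | zero => simpa using hba
      | succ j => simpa using ih (by omega)

end Stmt4
namespace Stmt4

lemma fceRank_p (e : ℕ) (t : List PSym) :
    fceRank (PSym.p e :: t) = 1 + cnt t (min (t.idxOf (PSym.p e)) t.length) := by
  set k := t.idxOf (PSym.p e) with hk
  have hkle : k ≤ t.length := List.idxOf_le_length
  show distinctP ((PSym.p e :: t).take (min (PSym.p e :: t).length (2 + k)))
      = 1 + cnt t (min k t.length)
  by_cases hlt : k < t.length
  · have hmin : min (PSym.p e :: t).length (2 + k) = k + 2 := by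
      simp only [List.length_cons]; omega
    have hmin2 : min k t.length = k := by omega
    rw [hmin, hmin2]
    have htk : t[k]? = some (PSym.p e) := by
      rw [List.getElem?_eq_getElem hlt, List.getElem_idxOf hlt]
    have hinf : pencSym t k = Enc.inf := by
      rw [pencSym_eq_inf_iff hlt, htk]
      exact ⟨⟨e, rfl⟩, fun j hj => indexOf_min hj⟩
    have htake : (PSym.p e :: t).take (k + 2) = PSym.p e :: t.take (k + 1) := rfl
    rw [htake, distinctP_eq]
    have hfm : (PSym.p e :: t.take (k + 1)).filterMap pf = e :: (t.take (k + 1)).filterMap pf := by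
      simp
    rw [hfm, List.toFinset_cons]
    have hmem : e ∈ ((t.take (k + 1)).filterMap pf).toFinset := by
      rw [mem_pf_iff, mem_take_iff]
      exact ⟨k, by omega, htk⟩
    rw [Finset.insert_eq_self.mpr hmem, ← distinctP_eq, distinctP_take]
    have : min (k + 1) t.length = k + 1 := by omega
    rw [this, cnt_succ, if_pos hinf]
    omega
  · have hkeq : k = t.length := by omega
    have hnm : PSym.p e ∉ t := List.idxOf_eq_length_iff.mp hkeq
    have hmin : min (PSym.p e :: t).length (2 + k) = t.length + 1 := by
      simp only [List.length_cons]; omega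
    have hmin2 : min k t.length = t.length := by omega
    rw [hmin, hmin2, List.take_of_length_le (by simp), distinctP_eq]
    have hfm : (PSym.p e :: t).filterMap pf = e :: t.filterMap pf := by simp
    rw [hfm, List.toFinset_cons,
      Finset.card_insert_of_notMem (fun hm => hnm (mem_pf_iff.mp hm)), ← distinctP_eq]
    have h3 := distinctP_take t t.length
    rw [List.take_of_length_le (le_refl _), min_self] at h3
    omega

end Stmt4
namespace Stmt4

lemma s_lt_fin (a d : ℕ) : Enc.s a < Enc.fin d := by
  show Enc.toPair _ < Enc.toPair _
  simp [Enc.toPair, Prod.Lex.lt_iff]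

lemma fin_lt_inf (d : ℕ) : Enc.fin d < Enc.inf := by
  show Enc.toPair _ < Enc.toPair _
  simp [Enc.toPair, Prod.Lex.lt_iff]

lemma not_inf_lt (v : Enc) : ¬ Enc.inf < v := by
  cases v <;>
  · show ¬ Enc.toPair _ < Enc.toPair _
    simp [Enc.toPair, Prod.Lex.lt_iff]

lemma fin_lt_fin_iff (d d' : ℕ) : Enc.fin d < Enc.fin d' ↔ d < d' := by
  show Enc.toPair _ < Enc.toPair _ ↔ _
  simp [Enc.toPair, Prod.Lex.lt_iff]

lemma not_fin_lt_s (d a : ℕ) : ¬ Enc.fin d < Enc.s a := by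
  show ¬ Enc.toPair _ < Enc.toPair _
  simp [Enc.toPair, Prod.Lex.lt_iff]

/-- Distances in the encoding are bounded by the position. -/
lemma fin_le {w : List PSym} {i d : ℕ} (h : pencSym w i = Enc.fin d) : d ≤ i := by
  unfold pencSym at h
  rcases he : w[i]? with _ | (a | e) <;> rw [he] at h
  · simp at h
  · simp at h
  · rcases hp : prevOcc w i with _ | j <;> rw [hp] at h
    · simp at h
    · have := (prevOcc_eq_some_iff.mp hp).1
      simp only [Enc.fin.injEq] at h
      omega

/-- Second-occurrence characterization: distance equal to full position
forces the position to be the first re-occurrence of the head. -/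
lemma fin_full {e : ℕ} {t : List PSym} {i : ℕ}
    (h : pencSym (PSym.p e :: t) (i + 1) = Enc.fin (i + 1)) :
    i = t.idxOf (PSym.p e) := by
  unfold pencSym at h
  rcases he : (PSym.p e :: t)[i+1]? with _ | (a | c) <;> rw [he] at h
  · simp at h
  · simp at h
  · rcases hp : prevOcc (PSym.p e :: t) (i + 1) with _ | j <;> rw [hp] at h
    · simp at h
    · obtain ⟨hj, heq, hmax⟩ := prevOcc_eq_some_iff.mp hp
      simp only [Enc.fin.injEq] at h
      have hj0 : j = 0 := by omega
      subst hj0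
      rw [List.getElem?_cons_zero, List.getElem?_cons_succ] at heq
      rw [List.getElem?_cons_succ] at he
      rw [he] at heq
      have hce : PSym.p e = PSym.p c := Option.some.inj heq
      obtain rfl : e = c := by cases hce; rfl
      have hlt : i < t.length := by
        by_contra hc
        rw [List.getElem?_eq_none (by omega)] at he
        exact nomatch he
      have hbefore : ∀ l < i, t[l]? ≠ some (PSym.p e) := by
        intro l hl hc
        have h2 := hmax (l + 1) (by omega) (by omega)
        rw [List.getElem?_cons_succ, List.getElem?_cons_succ, he] at h2
        exact h2 hc
      have hle : t.idxOf (PSym.p e) ≤ i := by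
        by_contra hc
        exact indexOf_min (by omega : i < t.idxOf (PSym.p e)) he
      rcases Nat.lt_or_ge (t.idxOf (PSym.p e)) i with hlt2 | hge
      · exfalso
        refine hbefore _ hlt2 ?_
        have hmem : t.idxOf (PSym.p e) < t.length := by omega
        rw [List.getElem?_eq_getElem hmem, List.getElem_idxOf hmem]
      · omega

lemma cnt_congr {t t' : List PSym} {K : ℕ}
    (h : ∀ j < K, pencSym t j = pencSym t' j) : cnt t K = cnt t' K := by
  unfold cnt
  congr 1
  apply List.filter_congr
  intro i hi
  rw [List.mem_range] at hi
  simp [h i hi]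

lemma cnt_mono (t : List PSym) {K K' : ℕ} (h : K ≤ K') : cnt t K ≤ cnt t K' := by
  induction K', h using Nat.le_induction with
  | base => exact le_refl _
  | succ K' hK ih =>
    rw [cnt_succ]
    omega

end Stmt4
namespace Stmt4

lemma penc_static (a : ℕ) (t : List PSym) :
    penc (PSym.s a :: t) = Enc.s a :: penc t := by
  rw [penc_cons, pencSym_zero_s]
  congr 1
  apply List.map_congr_left
  intro i _
  exact pencSym_cons_succ_s

lemma exlt_first_diff {X Y : ℕ → Option Enc} {i0 : ℕ}
    (hagree : ∀ j < i0, X j = Y j) (hne : X i0 ≠ Y i0) :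
    (∃ i, (∀ j < i, X j = Y j) ∧ oLt (X i) (Y i)) ↔ oLt (X i0) (Y i0) := by
  constructor
  · rintro ⟨i, h1, h2⟩
    rcases lt_trichotomy i i0 with hlt | rfl | hgt
    · rw [hagree i hlt] at h2
      exact absurd h2 (oLt_irrefl _)
    · exact h2
    · exact absurd (h1 i0 hgt) hne
  · intro hlt
    exact ⟨i0, hagree, hlt⟩

lemma exlt_false {X Y : ℕ → Option Enc} (h : ∀ j, X j = Y j) :
    ¬ ∃ i, (∀ j < i, X j = Y j) ∧ oLt (X i) (Y i) := by
  rintro ⟨i, _, h2⟩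
  rw [h i] at h2
  exact oLt_irrefl _ h2

def cntF (B : ℕ → Option Enc) (K : ℕ) : ℕ :=
  ((List.range K).filter (fun j => B j = some Enc.inf)).length

lemma cntF_succ (B : ℕ → Option Enc) (K : ℕ) :
    cntF B (K + 1) = cntF B K + if B K = some Enc.inf then 1 else 0 := by
  unfold cntF
  rw [List.range_succ, List.filter_append, List.length_append]
  congr 1
  split <;> simp_all

lemma cntF_mono (B : ℕ → Option Enc) {K K' : ℕ} (h : K ≤ K') : cntF B K ≤ cntF B K' := by
  induction K', h using Nat.le_induction with
  | base => exact le_refl _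
  | succ K' hK ih =>
    rw [cntF_succ]
    omega

lemma cntF_congr {B D : ℕ → Option Enc} {K : ℕ}
    (h : ∀ j < K, B j = D j) : cntF B K = cntF D K := by
  unfold cntF
  congr 1
  apply List.filter_congr
  intro i hi
  rw [List.mem_range] at hi
  simp [h i hi]

end Stmt4
namespace Stmt4

lemma s_lt_inf (a : ℕ) : Enc.s a < Enc.inf := by
  show Enc.toPair _ < Enc.toPair _
  simp [Enc.toPair, Prod.Lex.lt_iff]

lemma main_abstract
    (X B Y D : ℕ → Option Enc) (n m kx ky : ℕ)
    (hXB : ∀ i, ¬(i = kx ∧ kx < n) → X i = B i)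
    (hXBk : kx < n → X kx = some (Enc.fin (kx + 1)) ∧ B kx = some Enc.inf)
    (h5X : ∀ i, ¬(i = kx ∧ kx < n) → X i ≠ some (Enc.fin (i + 1)))
    (hXd : ∀ i d, X i = some (Enc.fin d) → d ≤ i + 1)
    (hXnone : ∀ i, X i = none ↔ n ≤ i)
    (hYD : ∀ i, ¬(i = ky ∧ ky < m) → Y i = D i)
    (hYDk : ky < m → Y ky = some (Enc.fin (ky + 1)) ∧ D ky = some Enc.inf)
    (h5Y : ∀ i, ¬(i = ky ∧ ky < m) → Y i ≠ some (Enc.fin (i + 1)))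
    (hYd : ∀ i d, Y i = some (Enc.fin d) → d ≤ i + 1)
    (hYnone : ∀ i, Y i = none ↔ m ≤ i)
    (hcnt : cntF B (min kx n) = cntF D (min ky m)) :
    (∃ i, (∀ j < i, X j = Y j) ∧ oLt (X i) (Y i)) ↔
      (∃ i, (∀ j < i, B j = D j) ∧ oLt (B i) (D i)) := by
  classical
  by_cases hall : ∀ i, X i = Y i
  · refine iff_of_false (exlt_false hall) (exlt_false ?_)
    by_cases hkxs : kx < n
    · have hky : kx = ky ∧ ky < m := by
        by_contra hc
        exact h5Y kx hc (by rw [← hall kx]; exact (hXBk hkxs).1)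
      obtain ⟨hkk, hkym⟩ := hky
      intro i
      by_cases hik : i = kx
      · have hd := (hYDk hkym).2
        rw [← hkk] at hd
        rw [hik, (hXBk hkxs).2, hd]
      · rw [← hXB i (fun hc => hik hc.1), hall i,
          hYD i (fun hc => hik (by rw [hc.1, ← hkk]))]
    · have hkynot : ¬ ky < m := by
        intro hkym
        exact h5X ky (fun hc => hkxs hc.2) ((hall ky) ▸ (hYDk hkym).1)
      intro i
      rw [← hXB i (fun hc => hkxs hc.2), hall i, hYD i (fun hc => hkynot hc.2)]
  · push_neg at hall
    have hi0 : X (Nat.find hall) ≠ Y (Nat.find hall) := Nat.find_spec hall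
    have hagree : ∀ j < Nat.find hall, X j = Y j :=
      fun j hj => not_not.mp (Nat.find_min hall hj)
    set i0 := Nat.find hall with hi0def
    have hBD : ∀ j < i0, B j = D j := by
      intro j hj
      by_cases sxj : j = kx ∧ kx < n
      · by_cases syj : j = ky ∧ ky < m
        · have hbj : B j = some Enc.inf := by rw [sxj.1]; exact (hXBk sxj.2).2
          have hdj : D j = some Enc.inf := by rw [syj.1]; exact (hYDk syj.2).2
          rw [hbj, hdj]
        · exfalso
          have hXj : X j = some (Enc.fin (j + 1)) := by
            rw [sxj.1]; exact (hXBk sxj.2).1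
          exact h5Y j syj (by rw [← hagree j hj]; exact hXj)
      · by_cases syj : j = ky ∧ ky < m
        · exfalso
          have hYj : Y j = some (Enc.fin (j + 1)) := by
            rw [syj.1]; exact (hYDk syj.2).1
          exact h5X j sxj (by rw [hagree j hj]; exact hYj)
        · rw [← hXB j sxj, hagree j hj, hYD j syj]
    rw [exlt_first_diff hagree hi0]
    by_cases sx : i0 = kx ∧ kx < n
    · by_cases sy : i0 = ky ∧ ky < m
      · exfalso
        apply hi0
        have h1 : X i0 = some (Enc.fin (i0 + 1)) := by rw [sx.1]; exact (hXBk sx.2).1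
        have h2 : Y i0 = some (Enc.fin (i0 + 1)) := by rw [sy.1]; exact (hYDk sy.2).1
        rw [h1, h2]
      · have hXi : X i0 = some (Enc.fin (i0 + 1)) := by rw [sx.1]; exact (hXBk sx.2).1
        have hBi : B i0 = some Enc.inf := by rw [sx.1]; exact (hXBk sx.2).2
        have hYDi : Y i0 = D i0 := hYD i0 sy
        rcases hYv : Y i0 with _ | v
        · have hDi : D i0 = none := by rw [← hYDi, hYv]
          rw [exlt_first_diff hBD (by rw [hBi, hDi]; simp)]
          rw [hXi, hBi, hDi]
          simp
        · have hDi : D i0 = some v := by rw [← hYDi, hYv]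
          have hi0m : i0 < m := by
            by_contra hc
            rw [(hYnone i0).mpr (by omega)] at hYv
            exact nomatch hYv
          have hky_gt : i0 + 1 ≤ min ky m := by
            rcases Nat.lt_or_ge i0 ky with h' | h'
            · omega
            · exfalso
              rcases Nat.eq_or_lt_of_le h' with h'' | h''
              · exact sy ⟨h''.symm, by omega⟩
              · have hkym : ky < m := by omega
                have hYky : Y ky = some (Enc.fin (ky + 1)) := (hYDk hkym).1
                have hXky : X ky = some (Enc.fin (ky + 1)) := by
                  rw [hagree ky h'']; exact hYky
                refine h5X ky ?_ hXky
                rintro ⟨h3, _⟩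
                omega
          have hvinf : v ≠ Enc.inf := by
            intro hv
            subst hv
            have hc1 : min kx n = i0 := by omega
            have hc2 : cntF B i0 = cntF D i0 := cntF_congr hBD
            have hc3 : cntF D (i0 + 1) ≤ cntF D (min ky m) := cntF_mono D hky_gt
            rw [cntF_succ, if_pos hDi] at hc3
            rw [hc1] at hcnt
            omega
          rw [exlt_first_diff hBD
            (by rw [hBi, hDi]; intro hc; exact hvinf (Option.some.inj hc).symm)]
          rw [hXi, hBi, hDi]
          simp only [oLt_some_some]
          apply iff_of_false
          · rcases v with a | d | _
            · exact not_fin_lt_s _ _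
            · have hd : d ≤ i0 + 1 := hYd i0 d hYv
              have hdne : d ≠ i0 + 1 := by
                intro hdd
                exact h5Y i0 sy (by rw [hYv, hdd])
              rw [fin_lt_fin_iff]
              omega
            · exact absurd rfl hvinf
          · exact not_inf_lt v
    · by_cases sy : i0 = ky ∧ ky < m
      · have hYi : Y i0 = some (Enc.fin (i0 + 1)) := by rw [sy.1]; exact (hYDk sy.2).1
        have hDi : D i0 = some Enc.inf := by rw [sy.1]; exact (hYDk sy.2).2
        have hXBi : X i0 = B i0 := hXB i0 sx
        rcases hXv : X i0 with _ | u
        · have hBi : B i0 = none := by rw [← hXBi, hXv]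
          rw [exlt_first_diff hBD (by rw [hBi, hDi]; simp)]
          rw [hYi, hBi, hDi]
          simp
        · have hBi : B i0 = some u := by rw [← hXBi, hXv]
          have hi0n : i0 < n := by
            by_contra hc
            rw [(hXnone i0).mpr (by omega)] at hXv
            exact nomatch hXv
          have hkx_gt : i0 + 1 ≤ min kx n := by
            rcases Nat.lt_or_ge i0 kx with h' | h'
            · omega
            · exfalso
              rcases Nat.eq_or_lt_of_le h' with h'' | h''
              · exact sx ⟨h''.symm, by omega⟩
              · have hkxn : kx < n := by omega
                have hXkx : X kx = some (Enc.fin (kx + 1)) := (hXBk hkxn).1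
                have hYkx : Y kx = some (Enc.fin (kx + 1)) := by
                  rw [← hagree kx h'']; exact hXkx
                refine h5Y kx ?_ hYkx
                rintro ⟨h3, _⟩
                omega
          have huinf : u ≠ Enc.inf := by
            intro hu
            subst hu
            have hc1 : min ky m = i0 := by omega
            have hc2 : cntF B i0 = cntF D i0 := cntF_congr hBD
            have hc3 : cntF B (i0 + 1) ≤ cntF B (min kx n) := cntF_mono B hkx_gt
            rw [cntF_succ, if_pos hBi] at hc3
            rw [hc1] at hcnt
            omega
          rw [exlt_first_diff hBD
            (by rw [hBi, hDi]; intro hc; exact huinf (Option.some.inj hc))]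
          rw [hYi, hBi, hDi]
          simp only [oLt_some_some]
          apply iff_of_true
          · rcases u with a | d | _
            · exact s_lt_fin _ _
            · have hd : d ≤ i0 + 1 := hXd i0 d hXv
              have hdne : d ≠ i0 + 1 := by
                intro hdd
                exact h5X i0 sx (by rw [hXv, hdd])
              rw [fin_lt_fin_iff]
              omega
            · exact absurd rfl huinf
          · rcases u with a | d | _
            · exact s_lt_inf _
            · exact fin_lt_inf _
            · exact absurd rfl huinf
      · have h1 : X i0 = B i0 := hXB i0 sx
        have h2 : Y i0 = D i0 := hYD i0 sy
        rw [exlt_first_diff hBD (by rw [← h1, ← h2]; exact hi0), h1, h2]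

end Stmt4
namespace Stmt4

variable {e : ℕ} {t : List PSym}

lemma indexOf_eq_of_first {i : ℕ} (h1 : t[i]? = some (PSym.p e))
    (h2 : ∀ j < i, t[j]? ≠ some (PSym.p e)) : t.idxOf (PSym.p e) = i := by
  have hle : t.idxOf (PSym.p e) ≤ i := by
    by_contra hc
    exact indexOf_min (by omega) h1
  rcases Nat.eq_or_lt_of_le hle with h' | h'
  · exact h'
  · exfalso
    have hin : i < t.length := by
      by_contra hc
      rw [List.getElem?_eq_none (by omega)] at h1
      exact nomatch h1
    have hidx : t.idxOf (PSym.p e) < t.length := by omega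
    refine h2 _ h' ?_
    rw [List.getElem?_eq_getElem hidx, List.getElem_idxOf hidx]

lemma pstr_XB : ∀ i, ¬(i = t.idxOf (PSym.p e) ∧ t.idxOf (PSym.p e) < t.length) →
    (penc (PSym.p e :: t))[i + 1]? = (penc t)[i]? := by
  intro i hi
  rw [penc_getElem?, penc_getElem?]
  simp only [List.length_cons]
  by_cases hin : i < t.length
  · rw [if_pos (by omega), if_pos hin]
    congr 1
    apply pencSym_cons_succ
    by_contra hc
    push_neg at hc
    obtain ⟨h1, h2⟩ := hc
    have hidx := indexOf_eq_of_first h1 (fun j hj hj2 => (prevOcc_eq_none_iff.mp h2) j hj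
      (by rw [hj2, h1]))
    exact hi ⟨hidx.symm, by omega⟩
  · rw [if_neg (by omega), if_neg (by omega)]

lemma pstr_XBk (hk : t.idxOf (PSym.p e) < t.length) :
    (penc (PSym.p e :: t))[t.idxOf (PSym.p e) + 1]?
        = some (Enc.fin (t.idxOf (PSym.p e) + 1)) ∧
      (penc t)[t.idxOf (PSym.p e)]? = some Enc.inf := by
  have htk : t[t.idxOf (PSym.p e)]? = some (PSym.p e) := by
    rw [List.getElem?_eq_getElem hk, List.getElem_idxOf hk]
  have hprev : prevOcc t (t.idxOf (PSym.p e)) = none :=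
    prevOcc_eq_none_iff.mpr (fun j hj => by rw [htk]; exact indexOf_min hj)
  obtain ⟨h1, h2⟩ := pencSym_cons_succ_special htk hprev
  constructor
  · rw [penc_getElem?, if_pos (by simp only [List.length_cons]; omega), h2]
  · rw [penc_getElem?, if_pos hk, h1]

lemma pstr_5 : ∀ i, ¬(i = t.idxOf (PSym.p e) ∧ t.idxOf (PSym.p e) < t.length) →
    (penc (PSym.p e :: t))[i + 1]? ≠ some (Enc.fin (i + 1)) := by
  intro i hi hc
  rw [penc_getElem?] at hc
  split at hc
  · have hps : pencSym (PSym.p e :: t) (i + 1) = Enc.fin (i + 1) := Option.some.inj hc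
    have hik := fin_full hps
    have hin : i < t.length := by
      simp only [List.length_cons] at *
      omega
    exact hi ⟨hik, by rw [← hik]; exact hin⟩
  · exact nomatch hc

lemma pstr_d : ∀ i d, (penc (PSym.p e :: t))[i + 1]? = some (Enc.fin d) → d ≤ i + 1 := by
  intro i d hc
  rw [penc_getElem?] at hc
  split at hc
  · exact fin_le (Option.some.inj hc)
  · exact nomatch hc

lemma pstr_none : ∀ i, (penc (PSym.p e :: t))[i + 1]? = none ↔ t.length ≤ i := by
  intro i
  rw [penc_getElem?]
  simp only [List.length_cons]
  split
  · simp only [reduceCtorEq, false_iff]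
    omega
  · simp only [true_iff]
    omega

lemma cntF_penc (t : List PSym) {K : ℕ} (hK : K ≤ t.length) :
    cntF (fun i => (penc t)[i]?) K = cnt t K := by
  unfold cntF cnt
  congr 1
  apply List.filter_congr
  intro j hj
  rw [List.mem_range] at hj
  have hv : (penc t)[j]? = some (pencSym t j) := by
    rw [penc_getElem?, if_pos (by omega)]
  simp [hv]

end Stmt4
open Stmt4 in
/-- If fce(x) = fce(y), then ⟨x⟩ < ⟨y⟩ iff ⟨x[2..]⟩ < ⟨y[2..]⟩. -/
theorem stmt4 (x y : List PSym) (hx : x ≠ []) (hy : y ≠ [])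
    (h : fce x = fce y) :
    lexLt (penc x) (penc y) ↔ lexLt (penc x.tail) (penc y.tail) := by
  rcases x with _ | ⟨cx, tx⟩
  · exact absurd rfl hx
  rcases y with _ | ⟨cy, ty⟩
  · exact absurd rfl hy
  rcases cx with a | ex <;> rcases cy with b | ey
  · have hab : a = b := by simpa [fce] using h
    subst hab
    rw [List.tail_cons, List.tail_cons, penc_static, penc_static, lexLt_cons_iff]
  · exact absurd h (by simp [fce])
  · exact absurd h (by simp [fce])
  · rw [List.tail_cons, List.tail_cons]
    have hr : fceRank (PSym.p ex :: tx) = fceRank (PSym.p ey :: ty) := by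
      simpa [fce] using h
    rw [fceRank_p, fceRank_p] at hr
    have hhx : penc (PSym.p ex :: tx) = Enc.inf :: (penc (PSym.p ex :: tx)).tail := by
      rw [penc_cons, List.tail_cons, pencSym_zero_p]
    have hhy : penc (PSym.p ey :: ty) = Enc.inf :: (penc (PSym.p ey :: ty)).tail := by
      rw [penc_cons, List.tail_cons, pencSym_zero_p]
    rw [hhx, hhy, lexLt_cons_iff, lexLt_iff, lexLt_iff]
    simp only [List.getElem?_tail]
    exact main_abstract
      (fun i => (penc (PSym.p ex :: tx))[i + 1]?) (fun i => (penc tx)[i]?)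
      (fun i => (penc (PSym.p ey :: ty))[i + 1]?) (fun i => (penc ty)[i]?)
      tx.length ty.length (tx.idxOf (PSym.p ex)) (ty.idxOf (PSym.p ey))
      pstr_XB pstr_XBk pstr_5 pstr_d pstr_none
      pstr_XB pstr_XBk pstr_5 pstr_d pstr_none
      (by rw [cntF_penc tx (by omega), cntF_penc ty (by omega)]; omega)
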